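/- Every topological space on a countable underlying set is c-well-filtered. -/
import Mathlib


universe u

/-- A set is saturated if it equals the intersection of its open neighbourhoods. -/
def IsSaturatedSet {X : Type u} [TopologicalSpace X] (A : Set X) : Prop :=
  A = ⋂₀ {U : Set X | IsOpen U ∧ A ⊆ U}

/-- A family of sets is countably filtered (under `⊆`) if every countable subfamily
has a lower bound in the family. -/
def CntFilteredFam {X : Type u} (S : Set (Set X)) : Prop :=
  ∀ T ⊆ S, T.Countable → ∃ L ∈ S, ∀ t ∈ T, L ⊆ t

/-- A family of sets is countably directed (under `⊆`) if every countable subfamily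
has an upper bound in the family. -/
def CntDirectedFam {X : Type u} (S : Set (Set X)) : Prop :=
  ∀ T ⊆ S, T.Countable → ∃ U ∈ S, ∀ t ∈ T, t ⊆ U

/-- A space is c-well-filtered if for every countably filtered family of saturated
Lindelöf subsets whose intersection is contained in an open `U`, some member is contained in `U`. -/
def CWellFiltered (X : Type u) [TopologicalSpace X] : Prop :=
  ∀ S : Set (Set X), (∀ K ∈ S, IsSaturatedSet K ∧ IsLindelof K) →
    CntFilteredFam S → ∀ U : Set X, IsOpen U → ⋂₀ S ⊆ U → ∃ K ∈ S, K ⊆ U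

/-- every topological space on a countable set is c-well-filtered. -/
theorem stmt4 (X : Type u) [TopologicalSpace X] [Countable X] : CWellFiltered X := by
  intro S _ hF U _ hIU
  classical
  obtain ⟨K0, hK0, -⟩ := hF ∅ (Set.empty_subset S) Set.countable_empty
  have h : ∀ x : X, x ∉ ⋂₀ S → ∃ K ∈ S, x ∉ K := by
    intro x hx
    by_contra hc
    push_neg at hc
    exact hx fun K hK => hc K hK
  choose f hf1 hf2 using h
  set g : X → Set X := fun x => if hx : x ∈ ⋂₀ S then K0 else f x hx with hg
  have hgS : ∀ x, g x ∈ S := by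
    intro x
    by_cases hx : x ∈ ⋂₀ S
    · simp only [hg, dif_pos hx]; exact hK0
    · simp only [hg, dif_neg hx]; exact hf1 x hx
  obtain ⟨L, hLS, hL⟩ := hF (Set.range g) (Set.range_subset_iff.mpr hgS)
    (Set.countable_range g)
  refine ⟨L, hLS, fun x hxL => ?_⟩
  by_cases hx : x ∈ ⋂₀ S
  · exact hIU hx
  · have : L ⊆ g x := hL _ ⟨x, rfl⟩
    have hxg : x ∈ g x := this hxL
    simp only [hg, dif_neg hx] at hxg
    exact absurd hxg (hf2 x hx)
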